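/- Let S be a real symmetric positive definite n×n matrix, let Δ be a diagonal n×n matrix with strictly positive diagonal entries, and set M := Δ S Δ⁻¹. Let X = (X₁,…,Xₙ) be a random vector with values in [0,∞)ⁿ such that for every d ∈ ℝⁿ with all dᵢ ≥ 0, E[exp(−Σᵢ dᵢXᵢ)] = det(M)/det(D + M), where D is the diagonal matrix with diagonal entries d₁,…,dₙ. Then X has the same distribution as the random vector (½(η₁² + η̃₁²),…,½(ηₙ² + η̃ₙ²)), where η and η̃ are independent random vectors each distributed as the centered multivariate Gaussian N(0, S⁻¹) on ℝⁿ. -/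

import Mathlib

open MeasureTheory ProbabilityTheory Matrix

/-- The centered multivariate Gaussian measure on `ℝⁿ` with (positive definite)
covariance matrix `S`, defined via its density with respect to Lebesgue measure. -/
noncomputable def multivariateGaussian {n : ℕ} (S : Matrix (Fin n) (Fin n) ℝ) :
    Measure (Fin n → ℝ) :=
  volume.withDensity fun x =>
    ENNReal.ofReal ((Real.sqrt ((2 * Real.pi) ^ n * S.det))⁻¹ *
      Real.exp (-(x ⬝ᵥ S⁻¹.mulVec x) / 2))

namespace LaplaceAux

open scoped NNReal ENNReal

variable {n : ℕ}

/-! ### Part A: the multivariate Gaussian integral -/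

lemma my_sqrt_pow {x : ℝ} (h : 0 ≤ x) (m : ℕ) : Real.sqrt x ^ m = Real.sqrt (x ^ m) := by
  induction m with
  | zero => simp
  | succ k ih => rw [pow_succ, pow_succ, ih, ← Real.sqrt_mul (pow_nonneg h k)]

lemma sqrt_facts {A : Matrix (Fin n) (Fin n) ℝ} (hA : A.PosDef) :
    ∃ R : Matrix (Fin n) (Fin n) ℝ, Rᵀ = R ∧ R * R = A ∧ R.det ≠ 0 ∧ |R.det| = Real.sqrt A.det := by
  open scoped MatrixOrder in
  have hA0 : (0 : Matrix (Fin n) (Fin n) ℝ) ≤ A := Matrix.nonneg_iff_posSemidef.mpr hA.posSemidef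
  open scoped MatrixOrder in
  have hRR : CFC.sqrt A * CFC.sqrt A = A := CFC.sqrt_mul_sqrt_self A hA0
  open scoped MatrixOrder in
  refine ⟨CFC.sqrt A, ?_, hRR, ?_, ?_⟩
  · open scoped MatrixOrder in
    have h := (Matrix.nonneg_iff_posSemidef.mp (CFC.sqrt_nonneg A)).isHermitian
    rwa [Matrix.IsHermitian, conjTranspose_eq_transpose_of_trivial] at h
  · intro h
    have : A.det = 0 := by
      rw [← hRR, det_mul, h, mul_zero]
    exact hA.det_pos.ne' this
  · have h2 : (CFC.sqrt A).det ^ 2 = A.det := by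
      rw [sq, ← det_mul, hRR]
    rw [← h2, Real.sqrt_sq_eq_abs]

lemma qform_eq {A R : Matrix (Fin n) (Fin n) ℝ} (hT : Rᵀ = R) (hRR : R * R = A)
    (x : Fin n → ℝ) : x ⬝ᵥ A.mulVec x = (R.mulVec x) ⬝ᵥ (R.mulVec x) := by
  rw [← hRR, ← mulVec_mulVec, dotProduct_mulVec, ← mulVec_transpose, hT]

lemma std_gauss_prod_form : (fun y : Fin n → ℝ => Real.exp (-(y ⬝ᵥ y) / 2))
      = fun y : Fin n → ℝ => ∏ i, Real.exp (-(1/2 : ℝ) * (y i) ^ 2) := by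
  funext y
  rw [← Real.exp_sum]
  congr 1
  rw [dotProduct, ← neg_div, ← Finset.sum_neg_distrib, Finset.sum_div]
  exact Finset.sum_congr rfl fun i _ => by ring

lemma integrable_std_gauss :
    Integrable (fun y : Fin n → ℝ => Real.exp (-(y ⬝ᵥ y) / 2)) := by
  rw [std_gauss_prod_form]
  exact Integrable.fintype_prod (fun _ => integrable_exp_neg_mul_sq (by norm_num))

lemma integral_std_gauss :
    ∫ y : Fin n → ℝ, Real.exp (-(y ⬝ᵥ y) / 2) = Real.sqrt ((2 * Real.pi) ^ n) := by
  rw [std_gauss_prod_form, MeasureTheory.volume_pi, MeasureTheory.integral_fintype_prod_eq_pow (ι := Fin n)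
    (f := fun x : ℝ => Real.exp (-(1/2 : ℝ) * x ^ 2)), integral_gaussian,
    my_sqrt_pow (by positivity)]
  congr 1
  simp only [Fintype.card_fin]
  ring_nf

lemma continuous_std_gauss : Continuous (fun y : Fin n → ℝ => Real.exp (-(y ⬝ᵥ y) / 2)) := by
  have h : Continuous fun y : Fin n → ℝ => y ⬝ᵥ y :=
    continuous_finset_sum _ fun i _ => (continuous_apply i).mul (continuous_apply i)
  exact Real.continuous_exp.comp ((h.neg).div_const 2)

lemma integrable_exp_neg_qform {A : Matrix (Fin n) (Fin n) ℝ} (hA : A.PosDef) :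
    Integrable (fun x : Fin n → ℝ => Real.exp (-(x ⬝ᵥ A.mulVec x) / 2)) := by
  obtain ⟨R, hT, hRR, hdet, habs⟩ := sqrt_facts hA
  have hmap : Measure.map (Matrix.toLin' R) volume
      = ENNReal.ofReal (|R.det|⁻¹) • volume := by
    have := Real.map_matrix_volume_pi_eq_smul_volume_pi hdet
    rwa [abs_inv] at this
  have h1 : (fun x : Fin n → ℝ => Real.exp (-(x ⬝ᵥ A.mulVec x)/2))
      = (fun y : Fin n → ℝ => Real.exp (-(y ⬝ᵥ y)/2)) ∘ (Matrix.toLin' R) := by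
    funext x
    simp only [Function.comp_apply, Matrix.toLin'_apply, qform_eq hT hRR]
  rw [h1]
  have hmeas : Measurable (Matrix.toLin' R) :=
    (LinearMap.continuous_on_pi _).measurable
  rw [← integrable_map_measure (continuous_std_gauss.aestronglyMeasurable) hmeas.aemeasurable,
    hmap]
  exact integrable_std_gauss.smul_measure ENNReal.ofReal_ne_top

lemma integral_exp_neg_qform {A : Matrix (Fin n) (Fin n) ℝ} (hA : A.PosDef) :
    ∫ x : Fin n → ℝ, Real.exp (-(x ⬝ᵥ A.mulVec x) / 2)
      = Real.sqrt ((2 * Real.pi) ^ n / A.det) := by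
  obtain ⟨R, hT, hRR, hdet, habs⟩ := sqrt_facts hA
  have hmap : Measure.map (Matrix.toLin' R) volume
      = ENNReal.ofReal (|R.det|⁻¹) • volume := by
    have := Real.map_matrix_volume_pi_eq_smul_volume_pi hdet
    rwa [abs_inv] at this
  have hmeas : Measurable (Matrix.toLin' R) :=
    (LinearMap.continuous_on_pi _).measurable
  have h1 : ∫ x : Fin n → ℝ, Real.exp (-(x ⬝ᵥ A.mulVec x) / 2)
      = ∫ y : Fin n → ℝ, Real.exp (-(y ⬝ᵥ y) / 2) ∂(Measure.map (Matrix.toLin' R) volume) := by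
    rw [integral_map hmeas.aemeasurable continuous_std_gauss.aestronglyMeasurable]
    congr 1
    funext x
    simp only [Matrix.toLin'_apply, qform_eq hT hRR]
  rw [h1, hmap, integral_smul_measure, integral_std_gauss,
    ENNReal.toReal_ofReal (inv_nonneg.mpr (abs_nonneg _)), habs, smul_eq_mul,
    ← Real.sqrt_inv, ← Real.sqrt_mul (inv_nonneg.mpr hA.det_pos.le), inv_mul_eq_div]

/-! ### Part B: integrals against the multivariate Gaussian measure -/

lemma continuous_qform (A : Matrix (Fin n) (Fin n) ℝ) :
    Continuous (fun x : Fin n → ℝ => x ⬝ᵥ A.mulVec x) := by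
  simp only [dotProduct, Matrix.mulVec]
  apply continuous_finset_sum _ fun i _ => (continuous_apply i).mul ?_
  exact continuous_finset_sum _ fun j _ => continuous_const.mul (continuous_apply j)

lemma ratio_calc {s u : ℝ} (hs : 0 < s) (hu : 0 < u) :
    (Real.sqrt ((2 * Real.pi) ^ n * s⁻¹))⁻¹ * Real.sqrt ((2 * Real.pi) ^ n / u)
      = Real.sqrt (s / u) := by
  rw [← Real.sqrt_inv, ← Real.sqrt_mul (by positivity)]
  congr 1
  have h2 : (2 * Real.pi) ^ n ≠ 0 := by positivity
  field_simp

lemma det_inv_eq (S : Matrix (Fin n) (Fin n) ℝ) : (S⁻¹).det = S.det⁻¹ := by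
  rw [Matrix.det_nonsing_inv, Ring.inverse_eq_inv']

lemma integral_multivariateGaussian {S : Matrix (Fin n) (Fin n) ℝ} (hS : S.PosDef)
    (g : (Fin n → ℝ) → ℝ) :
    ∫ x, g x ∂(multivariateGaussian S⁻¹)
      = ∫ x, ((Real.sqrt ((2 * Real.pi) ^ n * S.det⁻¹))⁻¹ *
          Real.exp (-(x ⬝ᵥ S.mulVec x) / 2)) * g x := by
  have hinv : (S⁻¹)⁻¹ = S := Matrix.nonsing_inv_nonsing_inv S hS.det_pos.ne'.isUnit
  set c : ℝ := (Real.sqrt ((2 * Real.pi) ^ n * S.det⁻¹))⁻¹ with hc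
  have hcn : 0 ≤ c := inv_nonneg.mpr (Real.sqrt_nonneg _)
  have hr : ∀ x : Fin n → ℝ, 0 ≤ c * Real.exp (-(x ⬝ᵥ S.mulVec x) / 2) :=
    fun x => mul_nonneg hcn (Real.exp_nonneg _)
  have hrm : Measurable fun x : Fin n → ℝ =>
      Real.toNNReal (c * Real.exp (-(x ⬝ᵥ S.mulVec x) / 2)) := by
    apply Measurable.real_toNNReal
    exact (continuous_const.mul (Real.continuous_exp.comp
      ((continuous_qform S).neg.div_const 2))).measurable
  have hμ : _root_.multivariateGaussian S⁻¹ = volume.withDensity fun x =>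
      ((Real.toNNReal (c * Real.exp (-(x ⬝ᵥ S.mulVec x) / 2)) : ℝ≥0) : ℝ≥0∞) := by
    unfold _root_.multivariateGaussian
    rw [hinv, det_inv_eq S]
    rfl
  rw [hμ, integral_withDensity_eq_integral_smul hrm g]
  congr 1
  funext x
  rw [NNReal.smul_def, Real.coe_toNNReal _ (hr x), smul_eq_mul]

lemma gauss_laplace_sq {S : Matrix (Fin n) (Fin n) ℝ} (hS : S.PosDef)
    (d : Fin n → ℝ) (hd : ∀ i, 0 ≤ d i) :
    ∫ x, Real.exp (-(∑ i, d i * x i ^ 2) / 2) ∂(multivariateGaussian S⁻¹)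
      = Real.sqrt (S.det / (S + Matrix.diagonal d).det) := by
  have hSD : (S + Matrix.diagonal d).PosDef :=
    hS.add_posSemidef (Matrix.posSemidef_diagonal_iff.mpr fun i => by simpa using hd i)
  rw [integral_multivariateGaussian hS]
  have key : ∀ x : Fin n → ℝ,
      ((Real.sqrt ((2 * Real.pi) ^ n * S.det⁻¹))⁻¹ * Real.exp (-(x ⬝ᵥ S.mulVec x) / 2)) *
          Real.exp (-(∑ i, d i * x i ^ 2) / 2)
        = (Real.sqrt ((2 * Real.pi) ^ n * S.det⁻¹))⁻¹ *
          Real.exp (-(x ⬝ᵥ (S + Matrix.diagonal d).mulVec x) / 2) := by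
    intro x
    rw [mul_assoc, ← Real.exp_add]
    congr 2
    have hD : x ⬝ᵥ (Matrix.diagonal d).mulVec x = ∑ i, d i * x i ^ 2 := by
      rw [dotProduct]
      refine Finset.sum_congr rfl fun i _ => ?_
      rw [Matrix.mulVec_diagonal]
      ring
    rw [Matrix.add_mulVec, dotProduct_add, hD]
    ring
  simp_rw [key]
  rw [integral_const_mul _ _, integral_exp_neg_qform hSD, ratio_calc hS.det_pos hSD.det_pos]

lemma gauss_isProbability {S : Matrix (Fin n) (Fin n) ℝ} (hS : S.PosDef) :
    IsProbabilityMeasure (multivariateGaussian S⁻¹) := by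
  constructor
  have hinv : (S⁻¹)⁻¹ = S := Matrix.nonsing_inv_nonsing_inv S hS.det_pos.ne'.isUnit
  set c : ℝ := (Real.sqrt ((2 * Real.pi) ^ n * S.det⁻¹))⁻¹ with hc
  have hcn : 0 ≤ c := inv_nonneg.mpr (Real.sqrt_nonneg _)
  have hμ : _root_.multivariateGaussian S⁻¹ = volume.withDensity fun x =>
      ENNReal.ofReal (c * Real.exp (-(x ⬝ᵥ S.mulVec x) / 2)) := by
    unfold _root_.multivariateGaussian
    rw [hinv, det_inv_eq S]
  rw [hμ, withDensity_apply _ MeasurableSet.univ, setLIntegral_univ,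
    ← ofReal_integral_eq_lintegral_ofReal ((integrable_exp_neg_qform hS).const_mul c)
      (Filter.Eventually.of_forall fun x => mul_nonneg hcn (Real.exp_nonneg _)),
    integral_const_mul _ _, integral_exp_neg_qform hS, ratio_calc hS.det_pos hS.det_pos,
    div_self hS.det_pos.ne', Real.sqrt_one, ENNReal.ofReal_one]

/-! ### Part C: uniqueness of the Laplace transform on the nonnegative orthant -/

abbrev Cube (n : ℕ) := Fin n → Set.Icc (0:ℝ) 1

noncomputable def Tmap (x : Fin n → ℝ) : Cube n := fun i =>
  ⟨Real.exp (-(max (x i) 0)),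
    ⟨(Real.exp_pos _).le, Real.exp_le_one_iff.mpr (neg_nonpos.mpr (le_max_right _ _))⟩⟩

lemma continuous_Tmap : Continuous (Tmap (n := n)) :=
  continuous_pi fun i => Continuous.subtype_mk
    (Real.continuous_exp.comp ((continuous_apply i).max continuous_const).neg) _

noncomputable def Umap (t : Cube n) : Fin n → ℝ := fun i => -Real.log (t i : ℝ)

lemma measurable_Umap : Measurable (Umap (n := n)) :=
  measurable_pi_lambda _ fun i =>
    (Real.measurable_log.comp (measurable_subtype_coe.comp (measurable_pi_apply i))).neg

lemma Umap_Tmap {x : Fin n → ℝ} (hx : ∀ i, 0 ≤ x i) : Umap (Tmap x) = x := by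
  funext i
  simp [Umap, Tmap, Real.log_exp, max_eq_left (hx i)]

noncomputable def coordFn (i : Fin n) : C((Cube n), ℝ) :=
  ⟨fun t => (t i : ℝ), continuous_subtype_val.comp (continuous_apply i)⟩

lemma integrable_cm (ρ : Measure (Cube n)) [IsFiniteMeasure ρ] (g : C(Cube n, ℝ)) :
    Integrable (fun t => g t) ρ :=
  (BoundedContinuousFunction.mkOfCompact g).integrable ρ

lemma continuous_int (ρ : Measure (Cube n)) [IsProbabilityMeasure ρ] :
    Continuous (fun g : C(Cube n, ℝ) => ∫ t, g t ∂ρ) := by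
  apply (LipschitzWith.of_dist_le_mul (K := 1) ?_).continuous
  intro g h
  rw [dist_eq_norm, dist_eq_norm, ← integral_sub (integrable_cm ρ g) (integrable_cm ρ h),
    NNReal.coe_one, one_mul]
  have hb : ∀ t, ‖g t - h t‖ ≤ ‖g - h‖ := by
    intro t
    have := ContinuousMap.norm_coe_le_norm (g - h) t
    simpa using this
  calc ‖∫ t, (g t - h t) ∂ρ‖ ≤ ‖g - h‖ * (ρ Set.univ).toReal :=
        norm_integral_le_of_norm_le_const (Filter.Eventually.of_forall hb)
    _ = ‖g - h‖ := by simp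

lemma laplace_uniqueness {Ω Ω' : Type*} [MeasurableSpace Ω] [MeasurableSpace Ω']
    (P : Measure Ω) (Q : Measure Ω') [IsProbabilityMeasure P] [IsProbabilityMeasure Q]
    (X : Ω → Fin n → ℝ) (Y : Ω' → Fin n → ℝ) (hX : Measurable X) (hY : Measurable Y)
    (hX0 : ∀ ω i, 0 ≤ X ω i) (hY0 : ∀ ω' i, 0 ≤ Y ω' i)
    (h : ∀ d : Fin n → ℝ, (∀ i, 0 ≤ d i) →
      ∫ ω, Real.exp (-(∑ i, d i * X ω i)) ∂P = ∫ ω', Real.exp (-(∑ i, d i * Y ω' i)) ∂Q) :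
    Measure.map X P = Measure.map Y Q := by
  have hTX : Measurable (fun ω => Tmap (X ω)) := continuous_Tmap.measurable.comp hX
  have hTY : Measurable (fun ω' => Tmap (Y ω')) := continuous_Tmap.measurable.comp hY
  set μ' : Measure (Cube n) := Measure.map (fun ω => Tmap (X ω)) P with hμ'
  set ν' : Measure (Cube n) := Measure.map (fun ω' => Tmap (Y ω')) Q with hν'
  haveI : IsProbabilityMeasure μ' := Measure.isProbabilityMeasure_map hTX.aemeasurable
  haveI : IsProbabilityMeasure ν' := Measure.isProbabilityMeasure_map hTY.aemeasurable
  have hpoint : ∀ (k : Fin n → ℕ) (x : Fin n → ℝ), (∀ i, 0 ≤ x i) →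
      (∏ i, ((Tmap x i : ℝ)) ^ (k i)) = Real.exp (-(∑ i, (k i : ℝ) * x i)) := by
    intro k x hx
    have h1 : ∀ i : Fin n, ((Tmap x i : ℝ)) ^ (k i) = Real.exp (-((k i : ℝ) * x i)) := by
      intro i
      have : ((Tmap x i : ℝ)) = Real.exp (-(x i)) := by
        simp [Tmap, max_eq_left (hx i)]
      rw [this, ← Real.exp_nat_mul]
      congr 1
      ring
    simp_rw [h1]
    rw [← Real.exp_sum, Finset.sum_neg_distrib]
  have hmono : ∀ k : Fin n → ℕ,
      ∫ t : Cube n, ∏ i, ((t i : ℝ)) ^ (k i) ∂μ'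
        = ∫ t : Cube n, ∏ i, ((t i : ℝ)) ^ (k i) ∂ν' := by
    intro k
    have hcont : Continuous fun t : Cube n => ∏ i, ((t i : ℝ)) ^ (k i) :=
      continuous_finset_prod _ fun i _ =>
        (continuous_subtype_val.comp (continuous_apply i)).pow _
    rw [hμ', hν', integral_map hTX.aemeasurable hcont.aestronglyMeasurable,
      integral_map hTY.aemeasurable hcont.aestronglyMeasurable,
      show (fun ω => ∏ i, ((Tmap (X ω) i : ℝ)) ^ (k i))
          = fun ω => Real.exp (-(∑ i, (k i : ℝ) * X ω i)) from
        funext fun ω => hpoint k (X ω) (hX0 ω),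
      show (fun ω' => ∏ i, ((Tmap (Y ω') i : ℝ)) ^ (k i))
          = fun ω' => Real.exp (-(∑ i, (k i : ℝ) * Y ω' i)) from
        funext fun ω' => hpoint k (Y ω') (hY0 ω')]
    exact h (fun i => (k i : ℝ)) (fun i => Nat.cast_nonneg _)
  have hμν : μ' = ν' := by
    set A : Subalgebra ℝ C(Cube n, ℝ) := Algebra.adjoin ℝ (Set.range coordFn) with hA
    have hsep : A.SeparatesPoints := by
      intro s t hst
      obtain ⟨i, hi⟩ : ∃ i, s i ≠ t i := by
        by_contra hcon
        push_neg at hcon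
        exact hst (funext hcon)
      refine ⟨(coordFn i : Cube n → ℝ), ⟨coordFn i, Algebra.subset_adjoin ⟨i, rfl⟩, rfl⟩, ?_⟩
      simpa [coordFn] using fun hc => hi (Subtype.coe_injective hc)
    have htop := ContinuousMap.subalgebra_topologicalClosure_eq_top_of_separatesPoints A hsep
    have hE : IsClosed {g : C(Cube n, ℝ) | ∫ t, g t ∂μ' = ∫ t, g t ∂ν'} := by
      have heq : {g : C(Cube n, ℝ) | ∫ t, g t ∂μ' = ∫ t, g t ∂ν'}
          = (fun g : C(Cube n, ℝ) => (∫ t, g t ∂μ') - ∫ t, g t ∂ν') ⁻¹' {0} := by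
        ext g
        simp [sub_eq_zero]
      rw [heq]
      exact IsClosed.preimage ((continuous_int μ').sub (continuous_int ν')) isClosed_singleton
    have hsubset : (A : Set C(Cube n, ℝ)) ⊆ {g : C(Cube n, ℝ) | ∫ t, g t ∂μ' = ∫ t, g t ∂ν'} := by
      intro g hg
      have hg' : g ∈ Submodule.span ℝ
          ((Submonoid.closure (Set.range coordFn) : Submonoid C(Cube n, ℝ)) : Set C(Cube n, ℝ)) := by
        have : g ∈ Subalgebra.toSubmodule (Algebra.adjoin ℝ (Set.range (coordFn (n := n)))) := hg
        rwa [Algebra.adjoin_eq_span] at this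
      refine Submodule.span_induction ?_ ?_ ?_ ?_ hg'
      · intro m hm
        have hmon : ∃ k : Fin n → ℕ, ∀ t : Cube n, m t = ∏ i, ((t i : ℝ)) ^ (k i) := by
          refine Submonoid.closure_induction
            (motive := fun m _ => ∃ k : Fin n → ℕ, ∀ t : Cube n, m t = ∏ i, ((t i : ℝ)) ^ (k i))
            ?_ ?_ ?_ hm
          · rintro _ ⟨i, rfl⟩
            refine ⟨Pi.single i 1, fun t => ?_⟩
            rw [Finset.prod_eq_single i (fun j _ hj => by simp [Pi.single_eq_of_ne hj])
              (by simp)]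
            simp [coordFn]
          · exact ⟨0, fun t => by simp⟩
          · rintro a b _ _ ⟨ka, hka⟩ ⟨kb, hkb⟩
            refine ⟨ka + kb, fun t => ?_⟩
            simp [ContinuousMap.mul_apply, hka t, hkb t, Pi.add_apply, pow_add,
              Finset.prod_mul_distrib]
        obtain ⟨k, hk⟩ := hmon
        show ∫ t, m t ∂μ' = ∫ t, m t ∂ν'
        rw [show (fun t : Cube n => m t) = fun t => ∏ i, ((t i : ℝ)) ^ (k i) from funext hk]
        exact hmono k
      · simp
      · intro a b _ _ ha hb
        show ∫ t, (a + b) t ∂μ' = ∫ t, (a + b) t ∂ν'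
        simp only [ContinuousMap.add_apply]
        rw [integral_add (integrable_cm μ' a) (integrable_cm μ' b),
          integral_add (integrable_cm ν' a) (integrable_cm ν' b), ha, hb]
      · intro c a _ ha
        show ∫ t, (c • a) t ∂μ' = ∫ t, (c • a) t ∂ν'
        simp only [ContinuousMap.smul_apply, smul_eq_mul]
        rw [integral_const_mul, integral_const_mul, ha]
    have hall : ∀ g : C(Cube n, ℝ), ∫ t, g t ∂μ' = ∫ t, g t ∂ν' := by
      intro g
      have hcl : g ∈ closure (A : Set C(Cube n, ℝ)) := by
        rw [← Subalgebra.topologicalClosure_coe, htop]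
        trivial
      exact closure_minimal hsubset hE hcl
    apply ext_of_forall_lintegral_eq_of_IsFiniteMeasure
    intro f
    have hgc : Continuous fun t : Cube n => ((f t : ℝ≥0) : ℝ) :=
      NNReal.continuous_coe.comp f.continuous
    rw [lintegral_coe_eq_integral _ (integrable_cm μ' ⟨_, hgc⟩),
      lintegral_coe_eq_integral _ (integrable_cm ν' ⟨_, hgc⟩)]
    congr 1
    exact hall ⟨_, hgc⟩
  have hXmap : Measure.map X P = Measure.map Umap μ' := by
    rw [hμ', Measure.map_map measurable_Umap hTX]
    congr 1
    funext ω
    exact (Umap_Tmap (hX0 ω)).symm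
  have hYmap : Measure.map Y Q = Measure.map Umap ν' := by
    rw [hν', Measure.map_map measurable_Umap hTY]
    congr 1
    funext ω'
    exact (Umap_Tmap (hY0 ω')).symm
  rw [hXmap, hYmap, hμν]

end LaplaceAux

open LaplaceAux

/-- If `M = Δ S Δ⁻¹` with `S` symmetric positive definite and `Δ` a positive
diagonal matrix, and the `[0,∞)ⁿ`-valued random vector `X` has joint Laplace transform
`det M / det (D + M)`, then `X` is distributed as `(½(ηᵢ² + η̃ᵢ²))ᵢ` for independent
`N(0, S⁻¹)` vectors `η, η̃`. -/
theorem laplace_det_ratio_eq_sum_sq_gaussians {n : ℕ}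
    (S : Matrix (Fin n) (Fin n) ℝ) (hS : S.PosDef)
    (δ : Fin n → ℝ) (hδ : ∀ i, 0 < δ i)
    (M : Matrix (Fin n) (Fin n) ℝ)
    (hM : M = Matrix.diagonal δ * S * (Matrix.diagonal δ)⁻¹)
    {Ω : Type*} [MeasurableSpace Ω] (P : Measure Ω) [IsProbabilityMeasure P]
    (X : Ω → Fin n → ℝ) (hXm : Measurable X) (hX0 : ∀ ω i, 0 ≤ X ω i)
    (hlap : ∀ d : Fin n → ℝ, (∀ i, 0 ≤ d i) →
      ∫ ω, Real.exp (-(∑ i, d i * X ω i)) ∂P = M.det / (Matrix.diagonal d + M).det) :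
    Measure.map X P =
      Measure.map (fun p : (Fin n → ℝ) × (Fin n → ℝ) => fun i => ((p.1 i) ^ 2 + (p.2 i) ^ 2) / 2)
        ((multivariateGaussian S⁻¹).prod (multivariateGaussian S⁻¹)) := by
  haveI : IsProbabilityMeasure (multivariateGaussian S⁻¹) := gauss_isProbability hS
  set G := multivariateGaussian S⁻¹ with hG
  set Y : (Fin n → ℝ) × (Fin n → ℝ) → Fin n → ℝ :=
    fun p => fun i => ((p.1 i) ^ 2 + (p.2 i) ^ 2) / 2 with hYdef
  have hYc : Continuous Y := by
    apply continuous_pi fun i => Continuous.div_const ?_ 2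
    exact (((continuous_apply i).comp continuous_fst).pow 2).add
      (((continuous_apply i).comp continuous_snd).pow 2)
  have hY0 : ∀ p (i : Fin n), 0 ≤ Y p i := fun p i => by positivity
  -- determinant identities
  have hΔdet : (Matrix.diagonal δ).det ≠ 0 := by
    rw [Matrix.det_diagonal]
    exact (Finset.prod_pos fun i _ => hδ i).ne'
  have hΔunit : IsUnit (Matrix.diagonal δ).det := hΔdet.isUnit
  have hprod : (∏ i, δ i) ≠ 0 := (Finset.prod_pos fun i _ => hδ i).ne'
  have hdetM : M.det = S.det := by
    rw [hM, Matrix.det_mul, Matrix.det_mul, Matrix.det_nonsing_inv, Ring.inverse_eq_inv',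
      Matrix.det_diagonal]
    rw [mul_comm (∏ i, δ i) S.det, mul_assoc, mul_inv_cancel₀ hprod, mul_one]
  have hdetDM : ∀ d : Fin n → ℝ, (Matrix.diagonal d + M).det = (S + Matrix.diagonal d).det := by
    intro d
    have hcomm : Matrix.diagonal δ * Matrix.diagonal d
        = Matrix.diagonal d * Matrix.diagonal δ := by
      rw [Matrix.diagonal_mul_diagonal, Matrix.diagonal_mul_diagonal]
      exact congrArg _ (funext fun i => mul_comm _ _)
    have hDM : Matrix.diagonal d + M
        = Matrix.diagonal δ * (Matrix.diagonal d + S) * (Matrix.diagonal δ)⁻¹ := by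
      rw [hM, Matrix.mul_add, Matrix.add_mul, hcomm, Matrix.mul_assoc (Matrix.diagonal d),
        Matrix.mul_nonsing_inv _ hΔunit, Matrix.mul_one]
    rw [hDM, Matrix.det_mul, Matrix.det_mul, Matrix.det_nonsing_inv, Ring.inverse_eq_inv']
    have : (Matrix.diagonal d + S).det = (S + Matrix.diagonal d).det := by rw [add_comm]
    rw [this, Matrix.det_diagonal, mul_comm (∏ i, δ i) _, mul_assoc,
      mul_inv_cancel₀ hprod, mul_one]
  -- Laplace transform of the Gaussian side
  have hlapY : ∀ d : Fin n → ℝ, (∀ i, 0 ≤ d i) →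
      ∫ p, Real.exp (-(∑ i, d i * Y p i)) ∂(G.prod G)
        = M.det / (Matrix.diagonal d + M).det := by
    intro d hd
    have hSD : (S + Matrix.diagonal d).PosDef :=
      hS.add_posSemidef (Matrix.posSemidef_diagonal_iff.mpr fun i => by simpa using hd i)
    have hsplit : (fun p : (Fin n → ℝ) × (Fin n → ℝ) => Real.exp (-(∑ i, d i * Y p i)))
        = fun p => Real.exp (-(∑ i, d i * p.1 i ^ 2) / 2) *
            Real.exp (-(∑ i, d i * p.2 i ^ 2) / 2) := by
      funext p
      rw [← Real.exp_add]
      congr 1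
      have hsum : ∑ i, d i * Y p i
          = (∑ i, d i * p.1 i ^ 2) / 2 + (∑ i, d i * p.2 i ^ 2) / 2 := by
        rw [Finset.sum_div, Finset.sum_div, ← Finset.sum_add_distrib]
        refine Finset.sum_congr rfl fun i _ => ?_
        simp only [hYdef]
        ring
      rw [hsum]
      ring
    rw [hsplit, integral_prod_mul (f := fun x : Fin n → ℝ => Real.exp (-(∑ i, d i * x i ^ 2) / 2))
      (g := fun x : Fin n → ℝ => Real.exp (-(∑ i, d i * x i ^ 2) / 2)),
      hG, gauss_laplace_sq hS d hd, Real.mul_self_sqrt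
        (div_nonneg hS.det_pos.le hSD.det_pos.le),
      hdetM, hdetDM d]
  -- conclude by uniqueness of the Laplace transform
  refine laplace_uniqueness P (G.prod G) X Y hXm hYc.measurable hX0 hY0 ?_
  intro d hd
  rw [hlap d hd, hlapY d hd]
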